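/- Let L ≥ 0, let f : ℝ → ℝ² be 1-Lipschitz on the interval [0, L], and let r ≥ 0. Then vol(cthickening(r, f '' [0, L])) ≤ 2·L·r + π·r². -/

import Mathlib

open MeasureTheory Metric Set ENNReal

open RealInnerProductSpace

noncomputable section

/-- The plane `ℝ²` with the Euclidean metric. -/
abbrev Plane := EuclideanSpace ℝ (Fin 2)

lemma coord_volume (b : OrthonormalBasis (Fin 2) ℝ Plane) (a : Plane) (s t : Set ℝ)
    (hs : MeasurableSet s) (ht : MeasurableSet t) :
    volume {x : Plane | ⟪x - a, b 0⟫ ∈ s ∧ ⟪x - a, b 1⟫ ∈ t} = volume s * volume t := by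
  have key : ∀ i : Fin 2, ∀ x : Plane, ⟪x - a, b i⟫ = b.repr (x - a) i := by
    intro i x; rw [b.repr_apply_apply, real_inner_comm]
  have hpim : MeasurableSet (univ.pi fun i : Fin 2 => if i = 0 then s else t) :=
    MeasurableSet.univ_pi fun i => by split <;> assumption
  have hset : {x : Plane | ⟪x - a, b 0⟫ ∈ s ∧ ⟪x - a, b 1⟫ ∈ t}
      = (fun x => x + (-a)) ⁻¹' (⇑b.repr ⁻¹' (⇑(MeasurableEquiv.toLp 2 (Fin 2 → ℝ)).symm ⁻¹'
        (univ.pi fun i : Fin 2 => if i = 0 then s else t))) := by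
    ext x
    simp only [mem_setOf_eq, mem_preimage, Set.mem_pi, mem_univ, forall_true_left,
      ← sub_eq_add_neg, key]
    simp only [MeasurableEquiv.coe_toLp_symm, ← map_sub,
      Fin.forall_fin_two]
    simp
  rw [hset, measure_preimage_add_right volume (-a),
    b.measurePreserving_repr.measure_preimage (((EuclideanSpace.volume_preserving_symm_measurableEquiv_toLp
      (Fin 2)).measurable hpim)).nullMeasurableSet,
    (EuclideanSpace.volume_preserving_symm_measurableEquiv_toLp (Fin 2)).measure_preimage
      hpim.nullMeasurableSet, volume_pi_pi]
  simp [Fin.prod_univ_two]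

lemma plane_ball_volume (x : Plane) (ρ : ℝ) (hρ : 0 ≤ ρ) :
    volume (Metric.closedBall x ρ) = ENNReal.ofReal (Real.pi * ρ ^ 2) := by
  rw [EuclideanSpace.volume_closedBall]
  simp only [Fintype.card_fin]
  norm_num [Real.Gamma_two]
  rw [← ENNReal.ofReal_pow (Real.sqrt_nonneg _), Real.sq_sqrt Real.pi_pos.le, ← ENNReal.ofReal_pow hρ, ← ENNReal.ofReal_mul (by positivity)]
  ring_nf

lemma isCompact_seg (a c : Plane) : IsCompact (segment ℝ a c) := by
  rw [segment_eq_image']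
  exact isCompact_Icc.image (by continuity)


set_option maxHeartbeats 2000000 in
lemma stadium_volume (a c : Plane) (ρ : ℝ) (hρ : 0 ≤ ρ) :
    volume (cthickening ρ (segment ℝ a c)) ≤
      ENNReal.ofReal (2 * dist a c * ρ + Real.pi * ρ ^ 2) := by
  rcases eq_or_ne a c with rfl | hac
  · rw [segment_same, cthickening_singleton _ hρ, plane_ball_volume _ _ hρ]
    simp [dist_self]
  set ℓ : ℝ := dist a c with hℓdef
  have hℓ : 0 < ℓ := dist_pos.mpr hac
  set u : Plane := ℓ⁻¹ • (c - a) with hudef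
  have hca : c - a = ℓ • u := by rw [hudef, smul_inv_smul₀ hℓ.ne']
  have hnu : ‖u‖ = 1 := by
    rw [hudef, norm_smul, norm_inv, Real.norm_eq_abs, abs_of_pos hℓ]
    rw [show ‖c - a‖ = ℓ by rw [hℓdef, dist_eq_norm, norm_sub_rev]]
    field_simp
  clear_value u ℓ
  clear hudef hℓdef
  -- extend u to an orthonormal basis
  have hON : Orthonormal ℝ (({0} : Set (Fin 2)).restrict ![u, u]) := by
    constructor
    · rintro ⟨i, hi⟩
      rcases hi with rfl
      exact hnu
    · intro i j hij
      exact absurd (Subtype.ext (by rw [i.2, j.2])) hij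
  obtain ⟨b, hb⟩ := hON.exists_orthonormalBasis_extension_of_card_eq (by simp)
  have hb0 : b 0 = u := by simpa using hb 0 rfl
  have hb01 : ⟪u, b 1⟫ = 0 := by
    rw [← hb0]; exact b.orthonormal.2 (by decide)
  have hnb1 : ‖b 1‖ = 1 := b.orthonormal.1 1
  -- decomposition facts
  have hdec : ∀ z : Plane, ∀ σ : ℝ,
      ‖z - σ • u‖ ^ 2 = (⟪z, u⟫ - σ) ^ 2 + ‖z - ⟪z, u⟫ • u‖ ^ 2 := by
    intro z σ
    have hwu : ⟪z - ⟪z, u⟫ • u, u⟫ = 0 := by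
      rw [inner_sub_left, real_inner_smul_left, real_inner_self_eq_norm_sq, hnu]; ring
    have huw : ⟪u, z - ⟪z, u⟫ • u⟫ = 0 := by rw [real_inner_comm]; exact hwu
    have hrw : z - σ • u = (⟪z, u⟫ - σ) • u + (z - ⟪z, u⟫ • u) := by module
    rw [hrw, norm_add_sq_real, real_inner_smul_left, huw, norm_smul, Real.norm_eq_abs, hnu,
      mul_one, mul_zero, mul_zero, add_zero, sq_abs]
  have hb1inner : ∀ z : Plane, |⟪z, b 1⟫| ≤ ‖z - ⟪z, u⟫ • u‖ := by
    intro z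
    have h1 : ⟪z, b 1⟫ = ⟪z - ⟪z, u⟫ • u, b 1⟫ := by
      rw [inner_sub_left, real_inner_smul_left, hb01]; ring
    rw [h1]
    calc |⟪z - ⟪z, u⟫ • u, b 1⟫| ≤ ‖z - ⟪z, u⟫ • u‖ * ‖b 1‖ := abs_real_inner_le_norm _ _
    _ = ‖z - ⟪z, u⟫ • u‖ := by rw [hnb1, mul_one]
  -- the three pieces
  set S : Set Plane := {x | ⟪x - a, b 0⟫ ∈ Icc 0 ℓ ∧ ⟪x - a, b 1⟫ ∈ Icc (-ρ) ρ} with hS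
  set Pa : Set Plane := closedBall a ρ ∩ {x | ⟪x - a, b 0⟫ ≤ 0} with hPa
  set Pa' : Set Plane := closedBall a ρ ∩ {x | 0 ≤ ⟪x - a, b 0⟫} with hPa'
  set Pc : Set Plane := closedBall c ρ ∩ {x | ℓ ≤ ⟪x - a, b 0⟫} with hPc
  -- coverage
  have hcover : cthickening ρ (segment ℝ a c) ⊆ Pa ∪ S ∪ Pc := by
    intro x hx
    rw [(isCompact_seg a c).cthickening_eq_biUnion_closedBall hρ] at hx
    simp only [mem_iUnion, exists_prop] at hx
    obtain ⟨y, hy, hxy⟩ := hx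
    rw [segment_eq_image'] at hy
    obtain ⟨θ, hθ, rfl⟩ := hy
    rw [mem_closedBall, dist_eq_norm] at hxy
    have hxd : x - (a + θ • (c - a)) = (x - a) - (θ * ℓ) • u := by rw [hca]; module
    have key : (⟪x - a, u⟫ - θ * ℓ) ^ 2 + ‖(x - a) - ⟪x - a, u⟫ • u‖ ^ 2 ≤ ρ ^ 2 := by
      rw [← hdec (x - a) (θ * ℓ), ← hxd]
      exact pow_le_pow_left₀ (norm_nonneg _) hxy 2
    have hwρ : ‖(x - a) - ⟪x - a, u⟫ • u‖ ≤ ρ := by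
      refine le_of_pow_le_pow_left₀ two_ne_zero hρ ?_
      nlinarith [sq_nonneg (⟪x - a, u⟫ - θ * ℓ)]
    have hθℓ : 0 ≤ θ * ℓ ∧ θ * ℓ ≤ ℓ := ⟨mul_nonneg hθ.1 hℓ.le, by nlinarith [hθ.2]⟩
    rcases le_or_gt ⟪x - a, u⟫ 0 with hτ0 | hτ0
    · -- x ∈ Pa
      left; left
      refine ⟨?_, by simp only [mem_setOf_eq, hb0]; exact hτ0⟩
      rw [mem_closedBall, dist_eq_norm]
      have h0 : ‖(x - a) - (0:ℝ) • u‖ ^ 2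
          = (⟪x - a, u⟫ - 0) ^ 2 + ‖(x - a) - ⟪x - a, u⟫ • u‖ ^ 2 := hdec (x - a) 0
      rw [zero_smul, sub_zero] at h0
      refine le_of_pow_le_pow_left₀ two_ne_zero hρ ?_
      have h1 : ⟪x - a, u⟫ ^ 2 ≤ (⟪x - a, u⟫ - θ * ℓ) ^ 2 := by
        nlinarith [mul_nonneg (neg_nonneg.mpr hτ0) hθℓ.1]
      nlinarith
    rcases le_or_gt ⟪x - a, u⟫ ℓ with hτℓ | hτℓ
    · -- x ∈ S
      left; right
      refine ⟨?_, ?_⟩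
      · simp only [hb0, mem_Icc]
        exact ⟨hτ0.le, hτℓ⟩
      · simp only [mem_Icc, ← abs_le]
        exact (hb1inner (x - a)).trans hwρ
    · -- x ∈ Pc
      right
      refine ⟨?_, by simp only [mem_setOf_eq, hb0]; exact hτℓ.le⟩
      rw [mem_closedBall, dist_eq_norm]
      have hxc : x - c = (x - a) - ℓ • u := by rw [← hca]; abel
      have h0 := hdec (x - a) ℓ
      rw [hxc]
      refine le_of_pow_le_pow_left₀ two_ne_zero hρ ?_
      have h1 : (⟪x - a, u⟫ - ℓ) ^ 2 ≤ (⟪x - a, u⟫ - θ * ℓ) ^ 2 := by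
        nlinarith [mul_nonneg (sub_nonneg.mpr hθℓ.2)
          (show (0:ℝ) ≤ 2 * ⟪x - a, u⟫ - θ * ℓ - ℓ by linarith)]
      nlinarith only [h0, h1, key]
  -- measurability
  have hcont : ∀ w : Plane, Continuous fun x : Plane => ⟪x - a, w⟫ :=
    fun w => (continuous_id.sub continuous_const).inner continuous_const
  have hmS : MeasurableSet S :=
    (((hcont (b 0)).measurable) measurableSet_Icc).inter
      (((hcont (b 1)).measurable) measurableSet_Icc)
  have hmPa' : MeasurableSet Pa' :=
    measurableSet_closedBall.inter (measurableSet_le measurable_const (hcont (b 0)).measurable)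
  -- translation: volume Pc = volume Pa'
  have hip : ∀ x : Plane, ⟪x + (c - a) - a, b 0⟫ = ⟪x - a, b 0⟫ + ℓ := by
    intro x
    have h1 : x + (c - a) - a = (x - a) + ℓ • u := by rw [← hca]; abel
    rw [h1, inner_add_left, hb0, real_inner_smul_left, real_inner_self_eq_norm_sq, hnu]
    ring
  have hpre : (fun x => x + (c - a)) ⁻¹' Pc = Pa' := by
    ext x
    have hd : dist (x + (c - a)) c = dist x a := by
      have h2 := dist_add_right x a (c - a)
      rwa [show a + (c - a) = c by abel] at h2
    simp only [mem_preimage, hPc, hPa', mem_inter_iff, mem_closedBall, mem_setOf_eq, hd, hip x]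
    exact and_congr Iff.rfl (by constructor <;> intro h <;> linarith)
  have hPcPa' : volume Pc = volume Pa' := by
    rw [← measure_preimage_add_right volume (c - a) Pc, hpre]
  -- the hyperplane has measure zero
  have hhyp : volume {x : Plane | ⟪x - a, b 0⟫ ∈ ({0} : Set ℝ) ∧ ⟪x - a, b 1⟫ ∈ univ} = 0 := by
    rw [coord_volume b a _ _ (measurableSet_singleton 0) MeasurableSet.univ,
      Real.volume_singleton, zero_mul]
  have hPaPa' : volume Pa + volume Pa' ≤ ENNReal.ofReal (Real.pi * ρ ^ 2) := by
    rw [← measure_union_add_inter Pa hmPa']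
    have h1 : Pa ∪ Pa' ⊆ closedBall a ρ := by
      rw [hPa, hPa']
      exact union_subset inter_subset_left inter_subset_left
    have h2 : Pa ∩ Pa' ⊆ {x : Plane | ⟪x - a, b 0⟫ ∈ ({0} : Set ℝ) ∧ ⟪x - a, b 1⟫ ∈ univ} := by
      rintro x ⟨⟨-, hx1⟩, -, hx2⟩
      exact ⟨le_antisymm hx1 hx2, mem_univ _⟩
    calc volume (Pa ∪ Pa') + volume (Pa ∩ Pa')
        ≤ volume (closedBall a ρ) + 0 := by
          exact add_le_add (measure_mono h1) (le_of_le_of_eq (measure_mono h2) hhyp)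
      _ = ENNReal.ofReal (Real.pi * ρ ^ 2) := by rw [add_zero, plane_ball_volume _ _ hρ]
  have hvolS : volume S = ENNReal.ofReal (2 * ℓ * ρ) := by
    rw [hS, coord_volume b a _ _ measurableSet_Icc measurableSet_Icc, Real.volume_Icc,
      Real.volume_Icc, ← ENNReal.ofReal_mul (by linarith)]
    ring_nf
  calc volume (cthickening ρ (segment ℝ a c))
      ≤ volume (Pa ∪ S ∪ Pc) := measure_mono hcover
    _ ≤ volume (Pa ∪ S) + volume Pc := measure_union_le _ _
    _ ≤ volume Pa + volume S + volume Pc := add_le_add_left (measure_union_le _ _) _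
    _ = volume S + (volume Pa + volume Pa') := by rw [hPcPa']; ring
    _ ≤ ENNReal.ofReal (2 * ℓ * ρ) + ENNReal.ofReal (Real.pi * ρ ^ 2) := by
        rw [hvolS]; exact add_le_add_right hPaPa' _
    _ = ENNReal.ofReal (2 * ℓ * ρ + Real.pi * ρ ^ 2) := by
        rw [← ENNReal.ofReal_add (by positivity) (by positivity)]

lemma polygon_volume (g : ℕ → Plane) (ρ : ℝ) (hρ : 0 ≤ ρ) : ∀ n : ℕ,
    volume (⋃ i ∈ Finset.range (n + 1), cthickening ρ (segment ℝ (g i) (g (i + 1)))) ≤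
      ENNReal.ofReal (∑ i ∈ Finset.range (n + 1), 2 * dist (g i) (g (i + 1)) * ρ) +
        ENNReal.ofReal (Real.pi * ρ ^ 2) := by
  intro n
  have hterm : ∀ i : ℕ, 0 ≤ 2 * dist (g i) (g (i + 1)) * ρ :=
    fun i => mul_nonneg (mul_nonneg (by norm_num) dist_nonneg) hρ
  induction n with
  | zero =>
    simp only [zero_add, Finset.range_one, Finset.sum_singleton, Finset.set_biUnion_singleton]
    rw [← ENNReal.ofReal_add (hterm 0) (by positivity)]
    exact stadium_volume (g 0) (g 1) ρ hρ
  | succ n ih =>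
    set T := cthickening ρ (segment ℝ (g (n + 1)) (g (n + 1 + 1))) with hT
    set U := ⋃ i ∈ Finset.range (n + 1), cthickening ρ (segment ℝ (g i) (g (i + 1))) with hU
    have hstep : (⋃ i ∈ Finset.range (n + 1 + 1), cthickening ρ (segment ℝ (g i) (g (i + 1))))
        = T ∪ U := by
      rw [hU, hT, Finset.range_add_one, Finset.set_biUnion_insert]
    have hball : closedBall (g (n + 1)) ρ ⊆ U ∩ T := by
      apply subset_inter
      · refine subset_trans (closedBall_subset_cthickening
          (right_mem_segment ℝ (g n) (g (n + 1))) ρ) ?_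
        exact subset_biUnion_of_mem (u := fun i => cthickening ρ (segment ℝ (g i) (g (i + 1))))
          (Finset.self_mem_range_succ n)
      · exact closedBall_subset_cthickening (left_mem_segment ℝ (g (n + 1)) (g (n + 1 + 1))) ρ
    have hmT : MeasurableSet T := isClosed_cthickening.measurableSet
    have h1 : volume (U ∪ T) + ENNReal.ofReal (Real.pi * ρ ^ 2)
        ≤ (ENNReal.ofReal (∑ i ∈ Finset.range (n + 1), 2 * dist (g i) (g (i + 1)) * ρ) +
            ENNReal.ofReal (Real.pi * ρ ^ 2)) +
          ENNReal.ofReal (2 * dist (g (n + 1)) (g (n + 1 + 1)) * ρ + Real.pi * ρ ^ 2) := by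
      calc volume (U ∪ T) + ENNReal.ofReal (Real.pi * ρ ^ 2)
          ≤ volume (U ∪ T) + volume (U ∩ T) := by
            refine add_le_add_right ?_ _
            rw [← plane_ball_volume (g (n + 1)) ρ hρ]
            exact measure_mono hball
        _ = volume U + volume T := measure_union_add_inter U hmT
        _ ≤ _ := add_le_add ih (stadium_volume _ _ ρ hρ)
    rw [hstep, union_comm T U, ← ENNReal.add_le_add_iff_right
      (a := ENNReal.ofReal (Real.pi * ρ ^ 2)) ENNReal.ofReal_ne_top]
    refine h1.trans (le_of_eq ?_)
    have hsums : 0 ≤ ∑ i ∈ Finset.range (n + 1), 2 * dist (g i) (g (i + 1)) * ρ :=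
      Finset.sum_nonneg fun i _ => hterm i
    have hπ : 0 ≤ Real.pi * ρ ^ 2 := by positivity
    conv_rhs => rw [Finset.sum_range_succ]
    rw [ENNReal.ofReal_add (hterm (n + 1)) hπ, ENNReal.ofReal_add hsums (hterm (n + 1))]
    ring

set_option maxHeartbeats 2000000 in
/-- **Tube-volume estimate.** The closed `r`-thickening of a curve parametrized by a map
that is `1`-Lipschitz on `[0, L]` has area at most `2Lr + πr²`. -/
theorem tube_volume_le (L : ℝ) (hL : 0 ≤ L) (f : ℝ → Plane)
    (hf : LipschitzOnWith 1 f (Set.Icc 0 L)) (r : ℝ) (hr : 0 ≤ r) :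
    volume (Metric.cthickening r (f '' Set.Icc 0 L)) ≤
      ENNReal.ofReal (2 * L * r + Real.pi * r ^ 2) := by
  rcases hL.eq_or_lt with rfl | hL0
  · rw [Set.Icc_self, Set.image_singleton, cthickening_singleton _ hr,
      plane_ball_volume _ _ hr]
    exact ENNReal.ofReal_le_ofReal (by nlinarith)
  -- main case : L > 0
  have key : ∀ m : ℕ, volume (Metric.cthickening r (f '' Set.Icc 0 L)) ≤
      ENNReal.ofReal (2 * L * (r + 2 * (L / (m + 1))) +
        Real.pi * (r + 2 * (L / (m + 1))) ^ 2) := by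
    intro m
    set n : ℕ := m + 1 with hn
    have hnpos : 0 < n := Nat.succ_pos m
    have hnR : (0:ℝ) < n := Nat.cast_pos.mpr hnpos
    set δ : ℝ := L / n with hδdef
    have hδ0 : 0 < δ := div_pos hL0 hnR
    have hnδ : (n:ℝ) * δ = L := by rw [hδdef]; field_simp
    set ρ : ℝ := r + 2 * δ with hρdef
    have hρ0 : 0 ≤ ρ := by positivity
    set g : ℕ → Plane := fun i => f (min ((i:ℝ) * δ) L) with hg
    have hmem : ∀ j : ℕ, min ((j:ℝ) * δ) L ∈ Set.Icc (0:ℝ) L :=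
      fun j => ⟨le_min (by positivity) hL0.le, min_le_right _ _⟩
    have hfd : ∀ s t : ℝ, s ∈ Set.Icc (0:ℝ) L → t ∈ Set.Icc (0:ℝ) L →
        dist (f s) (f t) ≤ |s - t| := by
      intro s t hs ht
      have := hf.dist_le_mul s hs t ht
      simpa [Real.dist_eq] using this
    have hgd : ∀ i : ℕ, dist (g i) (g (i + 1)) ≤ δ := by
      intro i
      refine (hfd _ _ (hmem i) (hmem (i + 1))).trans ?_
      push_cast
      rcases le_total ((i:ℝ) * δ) L with h1 | h1 <;>
        rcases le_total (((i:ℝ) + 1) * δ) L with h2 | h2 <;>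
          simp only [min_eq_left, min_eq_right, h1, h2] <;>
            rw [abs_le] <;> constructor <;> nlinarith [hδ0.le]
    -- coverage
    have hne : (f '' Set.Icc 0 L).Nonempty := ⟨f 0, mem_image_of_mem f ⟨le_refl 0, hL0.le⟩⟩
    have hcov : Metric.cthickening r (f '' Set.Icc 0 L) ⊆
        ⋃ i ∈ Finset.range n, cthickening ρ (segment ℝ (g i) (g (i + 1))) := by
      intro x hx
      rw [mem_cthickening_iff] at hx
      have h1 : infDist x (f '' Set.Icc 0 L) ≤ r := ENNReal.toReal_le_of_le_ofReal hr hx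
      have h2 : infDist x (f '' Set.Icc 0 L) < r + δ := lt_of_le_of_lt h1 (by linarith)
      obtain ⟨y, hy, hxy⟩ := (infDist_lt_iff hne).mp h2
      obtain ⟨t, ht, rfl⟩ := hy
      set i : ℕ := min (⌊t / δ⌋₊) (m) with hi
      have hin : i < n := lt_of_le_of_lt (min_le_right _ _) (Nat.lt_succ_self m)
      have hnδ' : ((m:ℝ) + 1) * δ = L := by rw [← hnδ]; norm_num [hn]
      have hiL : (i:ℝ) * δ ≤ L := by
        have him : (i:ℝ) ≤ m := Nat.cast_le.mpr (min_le_right _ _)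
        nlinarith [mul_nonneg (sub_nonneg.mpr him) hδ0.le, hδ0.le]
      have hlow : (i:ℝ) * δ ≤ t := by
        have h3 : (i:ℝ) ≤ t / δ :=
          le_trans (Nat.cast_le.mpr (min_le_left _ _)) (Nat.floor_le (div_nonneg ht.1 hδ0.le))
        calc (i:ℝ) * δ ≤ (t / δ) * δ := by nlinarith [hδ0.le]
          _ = t := by field_simp
      have hup : t ≤ ((i:ℝ) + 1) * δ := by
        rcases le_or_gt (⌊t / δ⌋₊) m with hc | hc
        · have hieq : i = ⌊t / δ⌋₊ := min_eq_left hc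
          have h4 : t / δ < (⌊t / δ⌋₊ : ℝ) + 1 := Nat.lt_floor_add_one _
          have h5 : (t / δ) * δ = t := by field_simp
          rw [hieq]
          nlinarith [mul_lt_mul_of_pos_right h4 hδ0, h5]
        · have hieq : i = m := min_eq_right hc.le
          have : ((i:ℝ) + 1) * δ = L := by rw [hieq, ← hnδ]; push_cast [hn]; ring
          rw [this]; exact ht.2
      have hdig : dist (f t) (g i) ≤ δ := by
        have : g i = f ((i:ℝ) * δ) := by rw [hg]; simp only [min_eq_left hiL]
        rw [this]
        refine (hfd t _ ht ⟨by positivity, hiL⟩).trans ?_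
        rw [abs_le]
        constructor <;> nlinarith
      have hxgi : dist x (g i) ≤ ρ := by
        calc dist x (g i) ≤ dist x (f t) + dist (f t) (g i) := dist_triangle _ _ _
          _ ≤ (r + δ) + δ := add_le_add hxy.le hdig
          _ = ρ := by rw [hρdef]; ring
      exact mem_biUnion (Finset.mem_range.mpr hin)
        (mem_cthickening_of_dist_le x (g i) ρ _ (left_mem_segment ℝ _ _) hxgi)
    -- sum bound
    have hsum : ∑ i ∈ Finset.range n, 2 * dist (g i) (g (i + 1)) * ρ ≤ 2 * L * ρ := by
      calc ∑ i ∈ Finset.range n, 2 * dist (g i) (g (i + 1)) * ρ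
          ≤ ∑ _i ∈ Finset.range n, 2 * δ * ρ :=
            Finset.sum_le_sum fun i _ =>
              mul_le_mul_of_nonneg_right
                (mul_le_mul_of_nonneg_left (hgd i) (by norm_num)) hρ0
        _ = (n:ℝ) * (2 * δ * ρ) := by
            rw [Finset.sum_const, Finset.card_range, nsmul_eq_mul]
        _ = 2 * L * ρ := by rw [← hnδ]; ring
    calc volume (Metric.cthickening r (f '' Set.Icc 0 L))
        ≤ volume (⋃ i ∈ Finset.range n, cthickening ρ (segment ℝ (g i) (g (i + 1)))) :=
          measure_mono hcov
      _ ≤ ENNReal.ofReal (∑ i ∈ Finset.range n, 2 * dist (g i) (g (i + 1)) * ρ) +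
            ENNReal.ofReal (Real.pi * ρ ^ 2) := polygon_volume g ρ hρ0 m
      _ ≤ ENNReal.ofReal (2 * L * ρ) + ENNReal.ofReal (Real.pi * ρ ^ 2) := by
          exact add_le_add_left (ENNReal.ofReal_le_ofReal hsum) _
      _ = ENNReal.ofReal (2 * L * ρ + Real.pi * ρ ^ 2) := by
          rw [← ENNReal.ofReal_add (by positivity) (by positivity)]
      _ = ENNReal.ofReal (2 * L * (r + 2 * (L / (m + 1))) +
            Real.pi * (r + 2 * (L / (m + 1))) ^ 2) := by
          rw [hρdef, hδdef, hn]; push_cast; ring_nf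
  -- pass to the limit
  have hδlim : Filter.Tendsto (fun m : ℕ => r + 2 * (L / (m + 1))) Filter.atTop (nhds r) := by
    have h1 : Filter.Tendsto (fun m : ℕ => L / ((m:ℝ) + 1)) Filter.atTop (nhds 0) := by
      have h0 := (tendsto_one_div_add_atTop_nhds_zero_nat).const_mul L
      simpa [div_eq_mul_inv] using h0
    have h2 := Filter.Tendsto.add (tendsto_const_nhds (x := r))
      (Filter.Tendsto.const_mul 2 h1)
    simpa using h2
  have hlim : Filter.Tendsto (fun m : ℕ => ENNReal.ofReal (2 * L * (r + 2 * (L / (m + 1))) +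
      Real.pi * (r + 2 * (L / (m + 1))) ^ 2)) Filter.atTop
      (nhds (ENNReal.ofReal (2 * L * r + Real.pi * r ^ 2))) := by
    apply ENNReal.tendsto_ofReal
    exact Filter.Tendsto.add (hδlim.const_mul (2 * L))
      ((hδlim.pow 2).const_mul Real.pi)
  exact ge_of_tendsto hlim (Filter.Eventually.of_forall key)

end
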